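/- Let d ≥ 1 be an integer, K > 0, α > 0 and ε ∈ (0,1) with (1−ε)·2^α > 1. Then sup over integers s ≥ 2 of exp(K^α s^α) · Σ_{v ∈ ℤ^d, |v| ≥ 2s−2} exp(−(1−ε)·K^α·|v|^α) is finite. -/

import Mathlib

/-- The Euclidean norm of an integer point of `ℤ^d`, viewed in `ℝ^d`. -/
noncomputable def euclNorm {d : ℕ} (z : Fin d → ℤ) : ℝ :=
  Real.sqrt (∑ i, ((z i : ℝ)) ^ 2)

set_option maxHeartbeats 1000000 in
open Real in
lemma summable_exp_neg_rpow_nat {c α : ℝ} (hc : 0 < c) (hα : 0 < α) :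
    Summable (fun n : ℕ => Real.exp (-(c * (n : ℝ) ^ α))) := by
  rw [← summable_nat_add_iff 1]
  set m := ⌈2 / α⌉₊ with hm
  have hm2 : (2 : ℝ) ≤ α * m := by
    have h := Nat.le_ceil (2 / α)
    calc (2:ℝ) = α * (2/α) := by field_simp
    _ ≤ α * m := by
      exact mul_le_mul_of_nonneg_left h hα.le
  have hsum : Summable (fun n : ℕ => ((Nat.factorial m : ℝ) / c ^ m) * ((n:ℝ)+1) ^ (-2 : ℝ)) := by
    apply Summable.mul_left
    have : Summable (fun n : ℕ => ((n:ℝ)) ^ (-2 : ℝ)) :=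
      Real.summable_nat_rpow.mpr (by norm_num)
    have := (summable_nat_add_iff 1).mpr this
    exact this.congr (fun n => by push_cast; ring_nf)
  refine Summable.of_nonneg_of_le (fun n => (Real.exp_pos _).le) (fun n => ?_) hsum
  rw [show ((n+1 : ℕ) : ℝ) = (n:ℝ) + 1 by push_cast; ring]
  set t : ℝ := (n:ℝ) + 1 with htdef
  have ht1 : (1:ℝ) ≤ t := by rw [htdef]; linarith [Nat.cast_nonneg (α := ℝ) n]
  have ht0 : (0:ℝ) < t := by linarith
  set x : ℝ := c * t ^ α with hx
  have hx0 : 0 < x := mul_pos hc (Real.rpow_pos_of_pos ht0 α)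
  have hxm : x ^ m / (Nat.factorial m : ℝ) ≤ Real.exp x := by
    refine le_trans ?_ (Real.sum_le_exp_of_nonneg hx0.le (m+1))
    exact Finset.single_le_sum (f := fun i => x ^ i / (Nat.factorial i : ℝ))
      (fun i _ => by positivity) (Finset.mem_range.mpr (Nat.lt_succ_self m))
  have hxmpos : 0 < x ^ m / (Nat.factorial m : ℝ) := by positivity
  have h1 : Real.exp (-(x)) ≤ (Nat.factorial m : ℝ) / x ^ m := by
    rw [Real.exp_neg]
    rw [show (Nat.factorial m : ℝ) / x ^ m = (x ^ m / (Nat.factorial m : ℝ))⁻¹ by rw [inv_div]]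
    exact inv_anti₀ hxmpos hxm
  refine h1.trans ?_
  have hxpow : x ^ m = c ^ m * t ^ (α * m) := by
    rw [hx, mul_pow, ← Real.rpow_natCast (t ^ α) m, ← Real.rpow_mul ht0.le]
  have htm : t ^ (2:ℝ) ≤ t ^ (α * m) :=
    Real.rpow_le_rpow_of_exponent_le ht1 hm2
  have ht2pos : 0 < t ^ (2:ℝ) := Real.rpow_pos_of_pos ht0 _
  have : (Nat.factorial m : ℝ) / x ^ m ≤ (Nat.factorial m : ℝ) / (c ^ m * t ^ (2:ℝ)) := by
    rw [hxpow]
    apply div_le_div_of_nonneg_left (by positivity) (by positivity)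
    exact mul_le_mul_of_nonneg_left htm (by positivity)
  refine this.trans (le_of_eq ?_)
  rw [htdef]
  rw [Real.rpow_neg (by positivity : (0:ℝ) ≤ (n:ℝ)+1), ← div_eq_mul_inv, div_div]

lemma summable_exp_neg_rpow_int {c α : ℝ} (hc : 0 < c) (hα : 0 < α) :
    Summable (fun k : ℤ => Real.exp (-(c * |(k : ℝ)| ^ α))) := by
  apply Summable.of_nat_of_neg
  · exact (summable_exp_neg_rpow_nat hc hα).congr
      (fun n => by simp [abs_of_nonneg (Nat.cast_nonneg (α := ℝ) n)])
  · exact (summable_exp_neg_rpow_nat hc hα).congr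
      (fun n => by push_cast; simp [abs_of_nonneg (Nat.cast_nonneg (α := ℝ) n)])

set_option maxHeartbeats 1000000 in
lemma summable_pi_exp (d : ℕ) {c α : ℝ} (hc : 0 < c) (hα : 0 < α) :
    Summable (fun v : Fin d → ℤ => ∏ i, Real.exp (-(c * |(v i : ℝ)| ^ α))) := by
  induction d with
  | zero => exact Summable.of_finite
  | succ n ih =>
    have h : Summable (fun p : ℤ × (Fin n → ℤ) =>
        Real.exp (-(c * |(p.1 : ℝ)| ^ α)) * ∏ i, Real.exp (-(c * |(p.2 i : ℝ)| ^ α))) := by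
      apply Summable.mul_of_nonneg (summable_exp_neg_rpow_int hc hα) ih
      · intro x; positivity
      · intro x; positivity
    have h2 := (Equiv.summable_iff (Fin.consEquiv (fun _ : Fin (n+1) => ℤ))
      (f := fun v : Fin (n+1) → ℤ => ∏ i, Real.exp (-(c * |(v i : ℝ)| ^ α)))).mp
    apply h2
    apply h.congr
    intro p
    simp [Fin.consEquiv, Function.comp, Fin.prod_univ_succ]

lemma abs_le_euclNorm {d : ℕ} (v : Fin d → ℤ) (i : Fin d) :
    |(v i : ℝ)| ≤ euclNorm v := by
  rw [euclNorm, ← Real.sqrt_sq_eq_abs]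
  exact Real.sqrt_le_sqrt
    (Finset.single_le_sum (fun j _ => sq_nonneg ((v j : ℝ))) (Finset.mem_univ i))

lemma euclNorm_nonneg {d : ℕ} (v : Fin d → ℤ) : 0 ≤ euclNorm v := Real.sqrt_nonneg _

set_option maxHeartbeats 1000000

/-- Key estimate in Lemmas 4.3 (lecN) and 4.4 (lecda): for `d ≥ 1`, `K, α > 0` and
`ε ∈ (0,1)` with `(1−ε)2^α > 1`, the quantity
`exp(K^α s^α) · Σ_{v ∈ ℤ^d, |v| ≥ 2s−2} exp(−(1−ε)K^α|v|^α)`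
is bounded uniformly over integers `s ≥ 2`. -/
theorem lecN_ratio_bound (d : ℕ) (hd : 1 ≤ d) (K α ε : ℝ) (hK : 0 < K) (hα : 0 < α)
    (hε : ε ∈ Set.Ioo (0 : ℝ) 1) (hεα : 1 < (1 - ε) * (2 : ℝ) ^ α) :
    ∃ C : ℝ, ∀ s : ℕ, 2 ≤ s →
      Real.exp (K ^ α * (s : ℝ) ^ α) *
        (∑' v : Fin d → ℤ,
            if 2 * (s : ℝ) - 2 ≤ euclNorm v
              then Real.exp (-((1 - ε) * K ^ α) * euclNorm v ^ α) else 0)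
        ≤ C := by
  obtain ⟨hε0, hε1⟩ := hε
  set A := K ^ α with hA
  have hApos : 0 < A := Real.rpow_pos_of_pos hK α
  set η := (1 - ε) * (2:ℝ) ^ α - 1 with hη
  have hηpos : 0 < η := by linarith
  have h2α : (0:ℝ) < (2:ℝ) ^ α := Real.rpow_pos_of_pos two_pos α
  have hβ : (1:ℝ) < (1 + η/2) ^ (α⁻¹) :=
    (Real.one_lt_rpow_iff_of_pos (by linarith)).mpr
      (Or.inl ⟨by linarith, inv_pos.mpr hα⟩)
  set T := 2 / ((1 + η/2) ^ (α⁻¹) - 1) with hT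
  have hTpos : 0 < T := div_pos two_pos (by linarith)
  set B := (T + 2) ^ α with hB
  have hBpos : 0 < B := Real.rpow_pos_of_pos (by linarith) α
  set δ := A / (2:ℝ) ^ α * (η/2) with hδ
  have hδpos : 0 < δ := by positivity
  set M₀ := A / (2:ℝ) ^ α * B with hM₀
  have hdpos : (0:ℝ) < d := by exact_mod_cast hd
  -- key elementary estimate
  have key : ∀ t : ℝ, 2 ≤ t → (t+2) ^ α ≤ (1 + η/2) * t ^ α + B := by
    intro t ht
    rcases le_total t T with h | h
    · have h1 : (t+2) ^ α ≤ B := Real.rpow_le_rpow (by linarith) (by linarith) hα.le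
      have h2 : 0 ≤ (1 + η/2) * t ^ α :=
        mul_nonneg (by linarith) (Real.rpow_nonneg (by linarith) _)
      linarith
    · have hTe : T * ((1 + η/2) ^ (α⁻¹) - 1) = 2 := by
        rw [hT]; exact div_mul_cancel₀ 2 (by linarith : ((1 + η/2) ^ (α⁻¹) - 1) ≠ 0)
      have hle : t + 2 ≤ t * (1 + η/2) ^ (α⁻¹) := by
        nlinarith [mul_le_mul_of_nonneg_right h (sub_nonneg.mpr hβ.le)]
      calc (t+2) ^ α ≤ (t * (1 + η/2) ^ (α⁻¹)) ^ α :=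
            Real.rpow_le_rpow (by linarith) hle hα.le
        _ = t ^ α * ((1 + η/2) ^ (α⁻¹)) ^ α :=
            Real.mul_rpow (by linarith) (Real.rpow_nonneg (by linarith) _)
        _ = t ^ α * (1 + η/2) := by
            rw [← Real.rpow_mul (by linarith : (0:ℝ) ≤ 1 + η/2),
              inv_mul_cancel₀ hα.ne', Real.rpow_one]
        _ ≤ (1 + η/2) * t ^ α + B := by nlinarith
  -- exponent estimate
  have key2 : ∀ s : ℕ, 2 ≤ s → ∀ t : ℝ, 2 * (s:ℝ) - 2 ≤ t →
      A * (s:ℝ) ^ α - (1 - ε) * A * t ^ α ≤ M₀ - δ * t ^ α := by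
    intro s hs t htv
    have hs2 : (2:ℝ) ≤ (s:ℝ) := by exact_mod_cast hs
    have ht2 : (2:ℝ) ≤ t := by linarith
    have hsle : (s:ℝ) ≤ (t+2)/2 := by linarith
    have h1 : (s:ℝ) ^ α ≤ ((t+2)/2) ^ α :=
      Real.rpow_le_rpow (by linarith) hsle hα.le
    have h2 : ((t+2)/2) ^ α = (t+2) ^ α / 2 ^ α :=
      Real.div_rpow (by linarith) (by norm_num) α
    have h3 := key t ht2
    have h1' : (s:ℝ) ^ α * 2 ^ α ≤ (1 + η/2) * t ^ α + B := by
      rw [h2] at h1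
      calc (s:ℝ) ^ α * 2 ^ α ≤ ((t+2) ^ α / 2 ^ α) * 2 ^ α :=
            mul_le_mul_of_nonneg_right h1 h2α.le
        _ = (t+2) ^ α := by field_simp
        _ ≤ (1 + η/2) * t ^ α + B := h3
    have hεe : (1 - ε) * (2:ℝ) ^ α = 1 + η := by rw [hη]; ring
    have hδe : δ * (2:ℝ) ^ α = A * (η/2) := by rw [hδ]; field_simp
    have hMe : M₀ * (2:ℝ) ^ α = A * B := by rw [hM₀]; field_simp
    rw [← mul_le_mul_iff_of_pos_right h2α]
    have H : A * ((s:ℝ) ^ α * 2 ^ α) ≤ A * ((1 + η/2) * t ^ α + B) :=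
      mul_le_mul_of_nonneg_left h1' hApos.le
    have hu : 0 ≤ t ^ α := Real.rpow_nonneg (by linarith) α
    nlinarith [H, hεe, hδe, hMe, mul_nonneg hApos.le hu]
  -- the dominating summable function
  have hcd : 0 < δ / d := div_pos hδpos hdpos
  have hG : Summable (fun v : Fin d → ℤ =>
      Real.exp M₀ * ∏ i, Real.exp (-(δ / d * |(v i : ℝ)| ^ α))) :=
    (summable_pi_exp d hcd hα).mul_left _
  refine ⟨∑' v : Fin d → ℤ,
      Real.exp M₀ * ∏ i, Real.exp (-(δ / d * |(v i : ℝ)| ^ α)), ?_⟩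
  intro s hs
  set G : (Fin d → ℤ) → ℝ :=
    fun v => Real.exp M₀ * ∏ i, Real.exp (-(δ / d * |(v i : ℝ)| ^ α)) with hGdef
  have hGnn : ∀ v, 0 ≤ G v := fun v =>
    mul_nonneg (Real.exp_pos _).le (Finset.prod_nonneg fun i _ => (Real.exp_pos _).le)
  -- pointwise bound
  have hbound : ∀ v : Fin d → ℤ,
      Real.exp (A * (s:ℝ) ^ α) *
        (if 2 * (s:ℝ) - 2 ≤ euclNorm v
          then Real.exp (-((1 - ε) * A) * euclNorm v ^ α) else 0) ≤ G v := by
    intro v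
    by_cases hc : 2 * (s:ℝ) - 2 ≤ euclNorm v
    · rw [if_pos hc]
      set t := euclNorm v with htd
      have ht0 : 0 ≤ t := euclNorm_nonneg v
      have hsum_le : (∑ i : Fin d, δ / d * |(v i : ℝ)| ^ α) ≤ δ * t ^ α := by
        have : ∀ i : Fin d, δ / d * |(v i : ℝ)| ^ α ≤ δ / d * t ^ α := by
          intro i
          exact mul_le_mul_of_nonneg_left
            (Real.rpow_le_rpow (abs_nonneg _) (abs_le_euclNorm v i) hα.le) hcd.le
        calc (∑ i : Fin d, δ / d * |(v i : ℝ)| ^ α) ≤ ∑ _i : Fin d, δ / d * t ^ α :=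
              Finset.sum_le_sum (fun i _ => this i)
          _ = d * (δ / d * t ^ α) := by rw [Finset.sum_const]; simp [mul_comm]
          _ = δ * t ^ α := by field_simp
      have hexp : A * (s:ℝ) ^ α + -((1 - ε) * A) * t ^ α ≤
          M₀ + -(∑ i : Fin d, δ / d * |(v i : ℝ)| ^ α) := by
        have := key2 s hs t hc
        have h2 : M₀ - δ * t ^ α ≤ M₀ - ∑ i : Fin d, δ / d * |(v i : ℝ)| ^ α := by
          linarith
        linarith
      calc Real.exp (A * (s:ℝ) ^ α) * Real.exp (-((1 - ε) * A) * t ^ α)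
          = Real.exp (A * (s:ℝ) ^ α + -((1 - ε) * A) * t ^ α) := (Real.exp_add _ _).symm
        _ ≤ Real.exp (M₀ + -(∑ i : Fin d, δ / d * |(v i : ℝ)| ^ α)) :=
            Real.exp_le_exp.mpr hexp
        _ = G v := by
            rw [Real.exp_add, hGdef]
            congr 1
            rw [← Real.exp_sum]
            congr 1
            rw [← Finset.sum_neg_distrib]
    · rw [if_neg hc, mul_zero]; exact hGnn v
  have hfs : Summable (fun v : Fin d → ℤ =>
      Real.exp (A * (s:ℝ) ^ α) *
        (if 2 * (s:ℝ) - 2 ≤ euclNorm v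
          then Real.exp (-((1 - ε) * A) * euclNorm v ^ α) else 0)) := by
    refine Summable.of_nonneg_of_le (fun v => ?_) hbound hG
    by_cases hc : 2 * (s:ℝ) - 2 ≤ euclNorm v
    · rw [if_pos hc]; positivity
    · rw [if_neg hc, mul_zero]
  calc Real.exp (A * (s:ℝ) ^ α) *
      (∑' v : Fin d → ℤ,
          if 2 * (s:ℝ) - 2 ≤ euclNorm v
            then Real.exp (-((1 - ε) * A) * euclNorm v ^ α) else 0)
      = ∑' v : Fin d → ℤ, Real.exp (A * (s:ℝ) ^ α) *
          (if 2 * (s:ℝ) - 2 ≤ euclNorm v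
            then Real.exp (-((1 - ε) * A) * euclNorm v ^ α) else 0) := (tsum_mul_left).symm
    _ ≤ ∑' v : Fin d → ℤ, G v := Summable.tsum_le_tsum hbound hfs hG
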